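/- On equidistant nodes, the cubic interpolating polynomial q on nodes {x_{i-1}, x_i, x_{i+1}, x_{i+2}} can be written on [x_i, x_{i+1}] as q(x) = C_0(x)·p_0(x) + C_1(x)·p_1(x), where p_0, p_1 are the quadratic interpolants on the stencils {x_{i-1}, x_i, x_{i+1}} and {x_i, x_{i+1}, x_{i+2}} respectively, the ideal weights are the affine functions C_0(x) = (x_{i+2} - x)/(3h) and C_1(x) = (x - x_{i-1})/(3h), and these satisfy C_0(x), C_1(x) ≥ 0 and C_0(x) + C_1(x) = 1 for all x in [x_i, x_{i+1}]. -/
import Mathlib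


open Set Polynomial

theorem stmt2 (xi h : ℝ) (hh : 0 < h) (vm1 v0 v1 v2 : ℝ)
    (p0 p1 q : Polynomial ℝ)
    (hp0deg : p0.natDegree ≤ 2)
    (hp0m : p0.eval (xi - h) = vm1) (hp00 : p0.eval xi = v0)
    (hp01 : p0.eval (xi + h) = v1)
    (hp1deg : p1.natDegree ≤ 2)
    (hp10 : p1.eval xi = v0) (hp11 : p1.eval (xi + h) = v1)
    (hp12 : p1.eval (xi + 2 * h) = v2)
    (hqdeg : q.natDegree ≤ 3)
    (hqm : q.eval (xi - h) = vm1) (hq0 : q.eval xi = v0)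
    (hq1 : q.eval (xi + h) = v1) (hq2 : q.eval (xi + 2 * h) = v2) :
    ∀ x ∈ Icc xi (xi + h),
      q.eval x = ((xi + 2 * h - x) / (3 * h)) * p0.eval x
          + ((x - (xi - h)) / (3 * h)) * p1.eval x ∧
      0 ≤ (xi + 2 * h - x) / (3 * h) ∧
      0 ≤ (x - (xi - h)) / (3 * h) ∧
      (xi + 2 * h - x) / (3 * h) + (x - (xi - h)) / (3 * h) = 1 := by
  have h3 : (3 : ℝ) * h ≠ 0 := by positivity
  set R : Polynomial ℝ :=
    C (3 * h) * q - (C (xi + 2 * h) - X) * p0 - (X - C (xi - h)) * p1 with hR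
  have hlin : ∀ a : ℝ, (C a - X : Polynomial ℝ).natDegree ≤ 1 := fun a =>
    (natDegree_sub_le _ _).trans (by simp)
  have hlin' : ∀ a : ℝ, (X - C a : Polynomial ℝ).natDegree ≤ 1 := fun a =>
    (natDegree_sub_le _ _).trans (by simp)
  have hRdeg : R.natDegree ≤ 3 := by
    refine (natDegree_sub_le _ _).trans (max_le ((natDegree_sub_le _ _).trans (max_le ?_ ?_)) ?_)
    · exact (natDegree_C_mul_le _ _).trans hqdeg
    · exact natDegree_mul_le.trans (by have := hlin (xi + 2 * h); omega)
    · exact natDegree_mul_le.trans (by have := hlin' (xi - h); omega)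
  have hRzero : R = 0 := by
    have hset : ({xi - h, xi, xi + h, xi + 2 * h} : Finset ℝ).card = 4 := by
      rw [Finset.card_insert_of_notMem (by
            simp only [Finset.mem_insert, Finset.mem_singleton]
            push_neg
            refine ⟨?_, ?_, ?_⟩ <;> intro hc <;> linarith),
          Finset.card_insert_of_notMem (by
            simp only [Finset.mem_insert, Finset.mem_singleton]
            push_neg
            refine ⟨?_, ?_⟩ <;> intro hc <;> linarith),
          Finset.card_insert_of_notMem (by
            simp only [Finset.mem_singleton]
            intro hc; linarith),
          Finset.card_singleton]
    apply Polynomial.eq_zero_of_natDegree_lt_card_of_eval_eq_zero' R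
      {xi - h, xi, xi + h, xi + 2 * h}
    · intro i hi
      simp only [Finset.mem_insert, Finset.mem_singleton] at hi
      rcases hi with rfl | rfl | rfl | rfl <;>
        simp only [hR, eval_sub, eval_mul, eval_C, eval_X, hqm, hq0, hq1, hq2,
          hp0m, hp00, hp01, hp10, hp11, hp12] <;> ring
    · rw [hset]; omega
  intro x hx
  obtain ⟨hx1, hx2⟩ := hx
  refine ⟨?_, div_nonneg (by linarith) (by positivity),
    div_nonneg (by linarith) (by positivity), by field_simp; ring⟩
  have hEval : R.eval x = 0 := by rw [hRzero]; simp
  simp only [hR, eval_sub, eval_mul, eval_C, eval_X] at hEval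
  field_simp
  linear_combination hEval
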